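/- Let f₁, f₂ be probability densities on ℝ with finite first moments, and w ∈ (0,1); let f = w f₁ + (1−w) f₂. Fix q₁, q₂ ∈ (0,1) with quantile thresholds t₁, t₂ (the q_i-quantile of f_i), and set q = w q₁ + (1−w) q₂ with y_q the q-quantile of f. Then (1/q)∫_{−∞}^{y_q} y f(y) dy ≤ (w q₁/q)·(1/q₁)∫_{−∞}^{t₁} y f₁(y) dy + ((1−w) q₂/q)·(1/q₂)∫_{−∞}^{t₂} y f₂(y) dy. -/

import Mathlib

open MeasureTheory Set

lemma key_ctb (f : ℝ → ℝ) (hf_nonneg : ∀ y, 0 ≤ f y)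
    (hf_int : Integrable f) (hf_mom : Integrable (fun y => y * f y)) (t s : ℝ) :
    ∫ y in Set.Iic s, y * f y
      ≤ (∫ y in Set.Iic t, y * f y) + s * ((∫ y in Set.Iic s, f y) - ∫ y in Set.Iic t, f y) := by
  have h1 : ((∫ y in Set.Iic s, y * f y) - ∫ y in Set.Iic t, y * f y)
      = ∫ y in t..s, y * f y :=
    intervalIntegral.integral_Iic_sub_Iic hf_mom.integrableOn hf_mom.integrableOn
  have h2 : ((∫ y in Set.Iic s, f y) - ∫ y in Set.Iic t, f y)
      = ∫ y in t..s, f y :=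
    intervalIntegral.integral_Iic_sub_Iic hf_int.integrableOn hf_int.integrableOn
  rw [← sub_le_iff_le_add', h1, h2]
  rcases le_total t s with h | h
  · rw [intervalIntegral.integral_of_le h, intervalIntegral.integral_of_le h,
      ← integral_const_mul]
    apply setIntegral_mono_on hf_mom.integrableOn
      (hf_int.integrableOn.const_mul s) measurableSet_Ioc
    intro x hx
    exact mul_le_mul_of_nonneg_right hx.2 (hf_nonneg x)
  · rw [intervalIntegral.integral_symm, intervalIntegral.integral_symm s t,
      intervalIntegral.integral_of_le h, intervalIntegral.integral_of_le h,
      mul_neg, neg_le_neg_iff, ← integral_const_mul]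
    apply setIntegral_mono_on (hf_int.integrableOn.const_mul s)
      hf_mom.integrableOn measurableSet_Ioc
    intro x hx
    exact mul_le_mul_of_nonneg_right (le_of_lt hx.1) (hf_nonneg x)

/-- Two-component special case of the covariate-tightened trimming bound. -/
theorem two_component_ctb
    (f₁ f₂ : ℝ → ℝ) (w q₁ q₂ q t₁ t₂ yq : ℝ)
    (hw : w ∈ Set.Ioo (0:ℝ) 1)
    (hq₁ : q₁ ∈ Set.Ioo (0:ℝ) 1) (hq₂ : q₂ ∈ Set.Ioo (0:ℝ) 1)
    (hf₁_nonneg : ∀ y, 0 ≤ f₁ y) (hf₂_nonneg : ∀ y, 0 ≤ f₂ y)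
    (hf₁_int : Integrable f₁) (hf₂_int : Integrable f₂)
    (hf₁_mass : ∫ y, f₁ y = 1) (hf₂_mass : ∫ y, f₂ y = 1)
    (hf₁_mom : Integrable (fun y => y * f₁ y))
    (hf₂_mom : Integrable (fun y => y * f₂ y))
    (ht₁ : ∫ y in Set.Iic t₁, f₁ y = q₁)
    (ht₂ : ∫ y in Set.Iic t₂, f₂ y = q₂)
    (hq : q = w * q₁ + (1 - w) * q₂)
    (hyq : ∫ y in Set.Iic yq, (w * f₁ y + (1 - w) * f₂ y) = q) :
    (1 / q) * ∫ y in Set.Iic yq, y * (w * f₁ y + (1 - w) * f₂ y)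
      ≤ (w * q₁ / q) * ((1 / q₁) * ∫ y in Set.Iic t₁, y * f₁ y)
        + ((1 - w) * q₂ / q) * ((1 / q₂) * ∫ y in Set.Iic t₂, y * f₂ y) := by
  obtain ⟨hw0, hw1⟩ := hw
  have hq0 : 0 < q := by
    have h1 : 0 < w * q₁ := mul_pos hw0 hq₁.1
    have h2 : 0 < (1 - w) * q₂ := mul_pos (by linarith) hq₂.1
    linarith [hq]
  set m₁ := ∫ y in Set.Iic yq, f₁ y with hm₁
  set m₂ := ∫ y in Set.Iic yq, f₂ y with hm₂
  set A₁ := ∫ y in Set.Iic yq, y * f₁ y with hA₁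
  set A₂ := ∫ y in Set.Iic yq, y * f₂ y with hA₂
  set B₁ := ∫ y in Set.Iic t₁, y * f₁ y with hB₁
  set B₂ := ∫ y in Set.Iic t₂, y * f₂ y with hB₂
  have hsplit : ∫ y in Set.Iic yq, (w * f₁ y + (1 - w) * f₂ y) = w * m₁ + (1 - w) * m₂ := by
    rw [hm₁, hm₂, ← integral_const_mul, ← integral_const_mul,
      integral_add ((hf₁_int.integrableOn).const_mul w)
        ((hf₂_int.integrableOn).const_mul (1 - w))]
  have hsplit2 : ∫ y in Set.Iic yq, y * (w * f₁ y + (1 - w) * f₂ y)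
      = w * A₁ + (1 - w) * A₂ := by
    rw [hA₁, hA₂, ← integral_const_mul, ← integral_const_mul,
      ← integral_add ((hf₁_mom.integrableOn).const_mul w)
        ((hf₂_mom.integrableOn).const_mul (1 - w))]
    congr 1; ext y; ring
  have k1 := key_ctb f₁ hf₁_nonneg hf₁_int hf₁_mom t₁ yq
  have k2 := key_ctb f₂ hf₂_nonneg hf₂_int hf₂_mom t₂ yq
  rw [ht₁] at k1
  rw [ht₂] at k2
  have hmass : w * m₁ + (1 - w) * m₂ = q := by rw [← hsplit]; exact hyq
  have hmain : w * A₁ + (1 - w) * A₂ ≤ w * B₁ + (1 - w) * B₂ := by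
    have hsum := add_le_add (mul_le_mul_of_nonneg_left k1 hw0.le)
      (mul_le_mul_of_nonneg_left k2 (by linarith : (0:ℝ) ≤ 1 - w))
    have hz : yq * ((w * m₁ + (1 - w) * m₂) - (w * q₁ + (1 - w) * q₂)) = 0 := by
      rw [hmass, ← hq]; ring
    nlinarith [hsum, hz]
  rw [hsplit2]
  have hq₁0 := hq₁.1.ne'
  have hq₂0 := hq₂.1.ne'
  have hrhs : (w * q₁ / q) * ((1 / q₁) * B₁) + ((1 - w) * q₂ / q) * ((1 / q₂) * B₂)
      = (1 / q) * (w * B₁ + (1 - w) * B₂) := by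
    field_simp
  rw [hrhs]
  exact mul_le_mul_of_nonneg_left hmain (by positivity)
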